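/- In a trace model where events are reads, writes, syncs, write-backs, and crashes on a single page, if Algorithm 1 is followed (write-back writes the page to disk and sets latest_dev := DISK; sync on a dirty page writes the page to NVM and sets latest_dev := NVM; recovery reads the page from the device named by latest_dev), then for every subsequence (write w, sync, crash, read r) in the trace with no crash between w and r, the value returned by r after recovery contains the data written by w (i.e., the recovered version is no earlier than w). -/

import Mathlib

/- Whole-page model of Algorithm 1: single page with version numbers,
   state = (cache, disk, nvm, dirty, latest_dev). -/

inductive Dev | disk | nvm
deriving DecidableEq

inductive Event
  | write (v : ℕ)   -- write a fresh version v to the cache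
  | sync
  | writeback
  | crash
  | read
deriving DecidableEq

structure St where
  cache : ℕ
  disk  : ℕ
  nvm   : ℕ
  dirty : Bool
  dev   : Dev

/-- The version held by the device named by `latest_dev`. -/
def deviceVal (s : St) : ℕ :=
  match s.dev with
  | .disk => s.disk
  | .nvm  => s.nvm

/-- Algorithm 1 transitions.  A crash erases the cache and recovery restores
    it from the device indicated by `latest_dev`. -/
def step (s : St) : Event → St
  | .write v   => { s with cache := v, dirty := true }
  | .writeback => { s with disk := s.cache, dirty := false, dev := .disk }
  | .sync      => if s.dirty then { s with nvm := s.cache, dirty := false, dev := .nvm } else s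
  | .crash     => { s with cache := deviceVal s }
  | .read      => s

def run (s : St) (tr : List Event) : St := tr.foldl step s

def Pinv (v : ℕ) (s : St) : Prop := v ≤ s.cache ∧ (s.dirty = true ∨ v ≤ deviceVal s)
def Qinv (v : ℕ) (s : St) : Prop := v ≤ s.cache ∧ v ≤ deviceVal s

lemma P_step {v s} (h : Pinv v s) (e : Event) (he : e ≠ Event.crash)
    (hw : ∀ u, e = Event.write u → v ≤ u) : Pinv v (step s e) := by
  obtain ⟨h1, h2⟩ := h
  cases e with
  | write u => exact ⟨hw u rfl, Or.inl rfl⟩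
  | writeback => exact ⟨h1, Or.inr (by simp [step, deviceVal]; exact h1)⟩
  | sync =>
    by_cases hd : s.dirty <;> simp [step, hd]
    · exact ⟨h1, Or.inr (by simp [deviceVal]; exact h1)⟩
    · exact ⟨h1, h2⟩
  | crash => exact absurd rfl he
  | read => exact ⟨h1, h2⟩

lemma Q_step {v s} (h : Qinv v s) (e : Event)
    (hw : ∀ u, e = Event.write u → v ≤ u) : Qinv v (step s e) := by
  obtain ⟨h1, h2⟩ := h
  cases e with
  | write u => exact ⟨hw u rfl, by simpa [step, deviceVal] using h2⟩
  | writeback => exact ⟨h1, by simp [step, deviceVal]; exact h1⟩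
  | sync =>
    by_cases hd : s.dirty <;> simp [step, hd]
    · exact ⟨h1, by simp [deviceVal]; exact h1⟩
    · exact ⟨h1, h2⟩
  | crash => exact ⟨by simpa [step] using h2, by simpa [step, deviceVal] using h2⟩
  | read => exact ⟨h1, h2⟩

lemma P_run {v s} (h : Pinv v s) (t : List Event) (hc : Event.crash ∉ t)
    (hw : ∀ e ∈ t, ∀ u, e = Event.write u → v ≤ u) : Pinv v (run s t) := by
  induction t generalizing s with
  | nil => exact h
  | cons e t ih =>
    simp only [List.mem_cons, not_or] at hc
    exact ih (P_step h e (fun h => hc.1 h.symm) (hw e List.mem_cons_self))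
      hc.2 (fun e' he' => hw e' (List.mem_cons_of_mem _ he'))

lemma Q_run {v s} (h : Qinv v s) (t : List Event)
    (hw : ∀ e ∈ t, ∀ u, e = Event.write u → v ≤ u) : Qinv v (run s t) := by
  induction t generalizing s with
  | nil => exact h
  | cons e t ih =>
    exact ih (Q_step h e (hw e List.mem_cons_self))
      (fun e' he' => hw e' (List.mem_cons_of_mem _ he'))

/-- If Algorithm 1 is followed, then for every subsequence
    (write v, sync, crash, read) in the trace with no other crash between the
    write and the read, the value returned by the read after recovery is a
    version no earlier than v (writes after `write v` have fresh versions ≥ v). -/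
theorem algorithm1_sync_semantics (s₀ : St) (v : ℕ) (t₁ t₂ t₃ t₄ : List Event)
    (hmono : ∀ e ∈ t₂ ++ t₃ ++ t₄, ∀ u, e = Event.write u → v ≤ u)
    (hc₂ : Event.crash ∉ t₂) (hc₃ : Event.crash ∉ t₃) (hc₄ : Event.crash ∉ t₄) :
    v ≤ (run s₀ (t₁ ++ [Event.write v] ++ t₂ ++ [Event.sync] ++ t₃ ++
          [Event.crash] ++ t₄)).cache := by
  have hm₂ : ∀ e ∈ t₂, ∀ u, e = Event.write u → v ≤ u := fun e he =>
    hmono e (by simp [he])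
  have hm₃ : ∀ e ∈ t₃, ∀ u, e = Event.write u → v ≤ u := fun e he =>
    hmono e (by simp [he])
  have hm₄ : ∀ e ∈ t₄, ∀ u, e = Event.write u → v ≤ u := fun e he =>
    hmono e (by simp [he])
  have hrun : ∀ (s : St) (a b : List Event), run s (a ++ b) = run (run s a) b := by
    intro s a b; simp [run, List.foldl_append]
  set s1 : St := step (run s₀ t₁) (Event.write v) with hs1
  have hP1 : Pinv v s1 := by constructor <;> simp [hs1, step]
  have hP2 : Pinv v (run s1 t₂) := P_run hP1 t₂ hc₂ hm₂
  have hQ3 : Qinv v (step (run s1 t₂) Event.sync) := by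
    obtain ⟨h1, h2⟩ := hP2
    by_cases hd : (run s1 t₂).dirty <;> simp [step, hd]
    · exact ⟨h1, by simp [deviceVal]; exact h1⟩
    · refine ⟨h1, ?_⟩
      rcases h2 with h | h
      · simp [hd] at h
      · exact h
  have hQ4 : Qinv v (run (step (run s1 t₂) Event.sync) (t₃ ++ [Event.crash] ++ t₄)) := by
    refine Q_run hQ3 _ ?_
    intro e he u heu
    simp only [List.mem_append, List.mem_singleton] at he
    rcases he with (he | he) | he
    · exact hm₃ e he u heu
    · subst he; exact absurd heu (by simp)
    · exact hm₄ e he u heu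
  have : run s₀ (t₁ ++ [Event.write v] ++ t₂ ++ [Event.sync] ++ t₃ ++
          [Event.crash] ++ t₄) =
      run (step (run s1 t₂) Event.sync) (t₃ ++ [Event.crash] ++ t₄) := by
    simp only [hrun, hs1]; simp [run]
  rw [this]
  exact hQ4.1
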